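/- Let G be a pro-p group with a free pro-p product decomposition G = G₁ *_p ··· *_p Gₙ into closed subgroups. Then for any elements σ₁, ..., σₙ ∈ G, the conjugates also give a free decomposition: G = G₁^{σ₁} *_p ··· *_p Gₙ^{σₙ}, where Gᵢ^{σᵢ} = σᵢ⁻¹ Gᵢ σᵢ. -/

import Mathlib

/-- A pro-`p` group: a compact, Hausdorff, totally disconnected topological group in which
every open normal subgroup has index a power of `p`. -/
def IsProP (p : ℕ) (G : Type*) [Group G] [TopologicalSpace G] : Prop :=
  CompactSpace G ∧ T2Space G ∧ TotallyDisconnectedSpace G ∧ IsTopologicalGroup G ∧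
    ∀ N : Subgroup G, N.Normal → IsOpen (N : Set G) → ∃ k : ℕ, N.index = p ^ k

/-- `G` is the free pro-`p` product of the family of closed subgroups `Gs i`,
expressed by the universal property of the coproduct in the category of pro-`p` groups. -/
def IsFreeProPProductFam (p : ℕ) (G : Type*) [Group G] [TopologicalSpace G]
    {n : ℕ} (Gs : Fin n → Subgroup G) : Prop :=
  ∀ (K : Type) [Group K] [TopologicalSpace K], IsProP p K →
    ∀ (f : (i : Fin n) → ((Gs i) →* K)), (∀ i, Continuous (f i)) →
      ∃! F : G →* K, Continuous F ∧ ∀ (i : Fin n) (x : Gs i), F x = f i x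

section Helpers

variable {p : ℕ} {G : Type*} [Group G] {n : ℕ} {Gs : Fin n → Subgroup G} {σ : Fin n → G}

/-- Finite discrete `p`-groups are pro-`p`. -/
lemma isProP_of_finite_discrete (hp : p.Prime) (S : Type*) [Group S]
    [TopologicalSpace S] [DiscreteTopology S] [Finite S] (hS : IsPGroup p S) :
    IsProP p S := by
  haveI : Fact p.Prime := ⟨hp⟩
  refine ⟨inferInstance, inferInstance, inferInstance,
    { continuous_mul := continuous_of_discreteTopology
      continuous_inv := continuous_of_discreteTopology }, ?_⟩
  intro N _ _
  obtain ⟨k, hk⟩ := IsPGroup.iff_card.mp hS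
  obtain ⟨j, _, hj⟩ := (Nat.dvd_prime_pow hp).mp (hk ▸ N.index_dvd_card)
  exact ⟨j, hj⟩

/-- The canonical conjugation map from `Gs i` to its conjugate subgroup. -/
def cjmap (Gs : Fin n → Subgroup G) (σ : Fin n → G) (i : Fin n) :
    (Gs i) →* ((Gs i).map (MulAut.conj (σ i)⁻¹).toMonoidHom) :=
  (MulAut.conj (σ i)⁻¹).toMonoidHom.subgroupMap (Gs i)

lemma cjmap_coe (i : Fin n) (x : Gs i) :
    ((cjmap Gs σ i x : _) : G) = (σ i)⁻¹ * x * ((σ i)⁻¹)⁻¹ := rfl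

lemma coe_eq_conj (i : Fin n) (x : Gs i) :
    (x : G) = σ i * ((cjmap Gs σ i x : _) : G) * (σ i)⁻¹ := by
  rw [cjmap_coe]; group

lemma cjmap_continuous [TopologicalSpace G] [IsTopologicalGroup G] (i : Fin n) :
    Continuous (cjmap Gs σ i) :=
  continuous_induced_rng.2 <|
    (continuous_const.mul continuous_subtype_val).mul continuous_const

/-- Any homomorphism agreeing with the `f i` on the conjugated subgroups restricts on the
original subgroups to the conjugated-and-twisted maps. -/
lemma solution_extends {K : Type*} [Group K] (F : G →* K)
    (f : (i : Fin n) → ((Gs i).map (MulAut.conj (σ i)⁻¹).toMonoidHom →* K))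
    (hsol : ∀ i (y : (Gs i).map (MulAut.conj (σ i)⁻¹).toMonoidHom), F y = f i y)
    (i : Fin n) (x : Gs i) :
    F x = F (σ i) * f i (cjmap Gs σ i x) * (F (σ i))⁻¹ := by
  calc F (x : G) = F (σ i * ((cjmap Gs σ i x : _) : G) * (σ i)⁻¹) := by
        rw [← coe_eq_conj]
    _ = F (σ i) * F ((cjmap Gs σ i x : _) : G) * (F (σ i))⁻¹ := by
        simp only [map_mul, map_inv]
    _ = F (σ i) * f i (cjmap Gs σ i x) * (F (σ i))⁻¹ :=
        congrArg (fun s => F (σ i) * s * (F (σ i))⁻¹) (hsol i (cjmap Gs σ i x))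

/-- Conversely, if `F` extends the conjugated-and-twisted maps on the original subgroups, and
the twisting discrepancies are central, then `F` agrees with the `f i` on the conjugates. -/
lemma central_extends_solution {K : Type*} [Group K] (F : G →* K)
    (f : (i : Fin n) → ((Gs i).map (MulAut.conj (σ i)⁻¹).toMonoidHom →* K))
    (t : Fin n → K)
    (hext : ∀ i (x : Gs i), F x = t i * f i (cjmap Gs σ i x) * (t i)⁻¹)
    (hcen : ∀ i (s : K), s * ((t i)⁻¹ * F (σ i)) = ((t i)⁻¹ * F (σ i)) * s) :
    ∀ i (y : (Gs i).map (MulAut.conj (σ i)⁻¹).toMonoidHom), F y = f i y := by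
  intro i y
  obtain ⟨x, hx, hxy⟩ := Subgroup.mem_map.mp y.2
  have h1 : cjmap Gs σ i ⟨x, hx⟩ = y := Subtype.ext hxy
  have h3 : F ((⟨x, hx⟩ : Gs i) : G) = t i * f i y * (t i)⁻¹ := by
    rw [hext i ⟨x, hx⟩, h1]
  have h4 : ((⟨x, hx⟩ : Gs i) : G) = σ i * (y : G) * (σ i)⁻¹ := by
    rw [coe_eq_conj (Gs := Gs) (σ := σ) i ⟨x, hx⟩, h1]
  have h5 : F (σ i) * F (y : G) * (F (σ i))⁻¹ = t i * f i y * (t i)⁻¹ := by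
    rw [← map_inv, ← map_mul, ← map_mul, ← h4]
    exact h3
  set c : K := (t i)⁻¹ * F (σ i) with hc
  have h6 : F (σ i) = t i * c := by rw [hc]; group
  have h8 : F (y : G) = (t i * c)⁻¹ * (t i * f i y * (t i)⁻¹) * (t i * c) := by
    rw [← h5, h6]; group
  have h7 : F (y : G) = c⁻¹ * (f i y * c) := by rw [h8]; group
  rw [h7, hcen i (f i y), inv_mul_cancel_left]

end Helpers

section KeyFin

variable {p : ℕ} {G : Type*} [Group G] [TopologicalSpace G] {n : ℕ}

/-- The main induction: the conjugated family has the universal property with respect to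
finite discrete `p`-groups. -/
lemma keyFin (hp : p.Prime) [IsTopologicalGroup G] (Gs : Fin n → Subgroup G)
    (hfree : IsFreeProPProductFam p G Gs) (σ : Fin n → G) (m : ℕ) :
    ∀ (S : Type) [Group S] [TopologicalSpace S] [DiscreteTopology S] [Finite S],
      IsPGroup p S → Nat.card S ≤ m →
      ∀ (f : (i : Fin n) → ((Gs i).map (MulAut.conj (σ i)⁻¹).toMonoidHom →* S)),
        (∀ i, Continuous (f i)) →
        ∃! F : G →* S, Continuous F ∧
          ∀ (i : Fin n) (x : (Gs i).map (MulAut.conj (σ i)⁻¹).toMonoidHom), F x = f i x := by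
  induction m with
  | zero =>
      intro S _ _ _ _ _ hm f hf
      haveI : Nonempty S := ⟨1⟩
      have := Nat.card_pos (α := S)
      omega
  | succ m ih =>
      intro S _ _ _ _ hS hm f hf
      haveI : Fact p.Prime := ⟨hp⟩
      by_cases h1 : Nat.card S = 1
      · -- trivial group case
        haveI : Subsingleton S := (Nat.card_eq_one_iff_unique.mp h1).1
        refine ⟨1, ⟨?_, fun i x => Subsingleton.elim _ _⟩, fun F _ => ?_⟩
        · show Continuous fun _ : G => (1 : S)
          exact continuous_const
        · ext g; exact Subsingleton.elim _ _
      · -- nontrivial case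
        haveI : Nonempty S := ⟨1⟩
        haveI : IsTopologicalGroup S :=
          { continuous_mul := continuous_of_discreteTopology
            continuous_inv := continuous_of_discreteTopology }
        haveI : Nontrivial S := Finite.one_lt_card_iff_nontrivial.mp
          (by have := Nat.card_pos (α := S); omega)
        haveI hZnt : Nontrivial (Subgroup.center S) := hS.center_nontrivial
        haveI : DiscreteTopology (S ⧸ Subgroup.center S) :=
          QuotientGroup.discreteTopology (isOpen_discrete _)
        have hScard : Nat.card S
            = Nat.card (S ⧸ Subgroup.center S) * Nat.card (Subgroup.center S) :=
          Subgroup.card_eq_card_quotient_mul_card_subgroup _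
        have hZ2 : 2 ≤ Nat.card (Subgroup.center S) :=
          Finite.one_lt_card_iff_nontrivial.mpr hZnt
        have hq1 : 1 ≤ Nat.card (S ⧸ Subgroup.center S) := Nat.card_pos
        have hqm : Nat.card (S ⧸ Subgroup.center S) ≤ m := by
          have h2 : Nat.card (S ⧸ Subgroup.center S) * 2 ≤ Nat.card S := by
            rw [hScard]; exact Nat.mul_le_mul_left _ hZ2
          omega
        have hS' : IsPGroup p (S ⧸ Subgroup.center S) := hS.to_quotient _
        have hπcont : Continuous (QuotientGroup.mk' (Subgroup.center S)) :=
          continuous_of_discreteTopology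
        -- apply induction hypothesis with the projected data
        obtain ⟨F', hF'⟩ := ih (S ⧸ Subgroup.center S) hS' hqm
          (fun i => (QuotientGroup.mk' (Subgroup.center S)).comp (f i))
          (fun i => by
            rw [MonoidHom.coe_comp]
            exact hπcont.comp (hf i))
        -- choose lifts of F' (σ i)
        choose t ht using fun i =>
          QuotientGroup.mk'_surjective (Subgroup.center S) (F' (σ i))
        -- the twisted maps on the original factors
        set gm : (i : Fin n) → (Gs i →* S) := fun i =>
          ((MulAut.conj (t i)).toMonoidHom.comp ((f i).comp (cjmap Gs σ i))) with hgm
        have hgmapp : ∀ i (x : Gs i), gm i x = t i * f i (cjmap Gs σ i x) * (t i)⁻¹ := by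
          intro i x
          simp [hgm, MulAut.conj_apply]
          rfl
        have hgmcont : ∀ i, Continuous (gm i) := by
          intro i
          rw [hgm]
          simp only [MonoidHom.coe_comp]
          exact continuous_of_discreteTopology.comp ((hf i).comp (cjmap_continuous i))
        have hSproP : IsProP p S := isProP_of_finite_discrete hp S hS
        obtain ⟨Ft, ⟨hFtc, hFt⟩, hFtu⟩ := hfree S hSproP gm hgmcont
        -- claim: π ∘ Ft = F', via uniqueness of extensions of π ∘ gm
        have hS'proP : IsProP p (S ⧸ Subgroup.center S) :=
          isProP_of_finite_discrete hp _ hS'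
        obtain ⟨W, hW, hWu⟩ := hfree (S ⧸ Subgroup.center S) hS'proP
          (fun i => (QuotientGroup.mk' (Subgroup.center S)).comp (gm i))
          (fun i => by
            rw [MonoidHom.coe_comp]
            exact hπcont.comp (hgmcont i))
        have e2 : (QuotientGroup.mk' (Subgroup.center S)).comp Ft = W := by
          refine hWu _ ⟨by rw [MonoidHom.coe_comp]; exact hπcont.comp hFtc, fun i x => ?_⟩
          simp only [MonoidHom.comp_apply]
          exact congrArg _ (hFt i x)
        have e3 : F' = W := by
          refine hWu _ ⟨hF'.1.1, fun i x => ?_⟩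
          calc F' ((x : G))
              = F' (σ i) * ((QuotientGroup.mk' (Subgroup.center S)).comp (f i))
                (cjmap Gs σ i x) * (F' (σ i))⁻¹ :=
              solution_extends F' _ hF'.1.2 i x
            _ = QuotientGroup.mk' (Subgroup.center S) (t i) *
                QuotientGroup.mk' (Subgroup.center S) (f i (cjmap Gs σ i x)) *
                (QuotientGroup.mk' (Subgroup.center S) (t i))⁻¹ := by
              rw [ht i]; rfl
            _ = QuotientGroup.mk' (Subgroup.center S)
                (t i * f i (cjmap Gs σ i x) * (t i)⁻¹) := by
              simp only [map_mul, map_inv]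
            _ = ((QuotientGroup.mk' (Subgroup.center S)).comp (gm i)) x := by
              rw [MonoidHom.comp_apply, hgmapp i x]
        have e4 : (QuotientGroup.mk' (Subgroup.center S)).comp Ft = F' := by
          rw [e2, e3]
        -- the discrepancies are central
        have hcenmem : ∀ i, (t i)⁻¹ * Ft (σ i) ∈ Subgroup.center S := by
          intro i
          have h5 : QuotientGroup.mk' (Subgroup.center S) (Ft (σ i)) = F' (σ i) :=
            DFunLike.congr_fun e4 (σ i)
          have h8 : QuotientGroup.mk' (Subgroup.center S) ((t i)⁻¹ * Ft (σ i)) = 1 := by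
            simp only [map_mul, map_inv]
            rw [ht i, h5, inv_mul_cancel]
          rw [QuotientGroup.mk'_apply] at h8
          exact (QuotientGroup.eq_one_iff _).mp h8
        have hcen : ∀ i (s : S),
            s * ((t i)⁻¹ * Ft (σ i)) = ((t i)⁻¹ * Ft (σ i)) * s := by
          intro i s
          exact (Subgroup.mem_center_iff.mp (hcenmem i)) s
        -- existence
        refine ⟨Ft, ⟨hFtc, central_extends_solution Ft f t
          (fun i x => by rw [hFt i x, hgmapp i x]) hcen⟩, ?_⟩
        -- uniqueness
        rintro F1 ⟨hF1c, hF1e⟩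
        have e5 : (QuotientGroup.mk' (Subgroup.center S)).comp F1 = F' := by
          refine hF'.2 _ ⟨by rw [MonoidHom.coe_comp]; exact hπcont.comp hF1c, fun i y => ?_⟩
          simp only [MonoidHom.comp_apply]
          exact congrArg _ (hF1e i y)
        have hcen1 : ∀ i, (t i)⁻¹ * F1 (σ i) ∈ Subgroup.center S := by
          intro i
          have h5 : QuotientGroup.mk' (Subgroup.center S) (F1 (σ i)) = F' (σ i) :=
            DFunLike.congr_fun e5 (σ i)
          have h8 : QuotientGroup.mk' (Subgroup.center S) ((t i)⁻¹ * F1 (σ i)) = 1 := by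
            simp only [map_mul, map_inv]
            rw [ht i, h5, inv_mul_cancel]
          rw [QuotientGroup.mk'_apply] at h8
          exact (QuotientGroup.eq_one_iff _).mp h8
        refine hFtu F1 ⟨hF1c, fun i x => ?_⟩
        have hx1 : F1 ((x : G)) = F1 (σ i) * f i (cjmap Gs σ i x) * (F1 (σ i))⁻¹ :=
          solution_extends F1 f hF1e i x
        rw [hx1, hgmapp i x]
        have h9 := (Subgroup.mem_center_iff.mp (hcen1 i)) (f i (cjmap Gs σ i x))
        have h6 : F1 (σ i) = t i * ((t i)⁻¹ * F1 (σ i)) := by group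
        rw [h6]
        have h10 : t i * ((t i)⁻¹ * F1 (σ i)) * f i (cjmap Gs σ i x) *
            (t i * ((t i)⁻¹ * F1 (σ i)))⁻¹ =
            t i * (((t i)⁻¹ * F1 (σ i)) * f i (cjmap Gs σ i x) *
              ((t i)⁻¹ * F1 (σ i))⁻¹) * (t i)⁻¹ := by group
        rw [h10, ← h9, mul_inv_cancel_right]

end KeyFin

section Sep

/-- Separation by open normal subgroups in a profinite group. -/
lemma sep_by_open_normal {K : Type*} [Group K] [TopologicalSpace K] [IsTopologicalGroup K]
    [CompactSpace K] [T2Space K] [TotallyDisconnectedSpace K] {y z : K}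
    (h : ∀ N : OpenNormalSubgroup K,
      (QuotientGroup.mk' N.toSubgroup) y = (QuotientGroup.mk' N.toSubgroup) z) : y = z := by
  by_contra hne
  have h1 : y⁻¹ * z ≠ 1 := fun h2 => hne (eq_of_inv_mul_eq_one h2)
  have hmem1 : (1 : K) ∈ ({y⁻¹ * z}ᶜ : Set K) := by
    simp only [Set.mem_compl_iff, Set.mem_singleton_iff]
    exact fun h2 => h1 h2.symm
  have hnb : ({y⁻¹ * z}ᶜ : Set K) ∈ nhds (1 : K) :=
    (isOpen_compl_singleton).mem_nhds hmem1
  obtain ⟨W, ⟨h1W, hWcl⟩, hWsub⟩ := (nhds_basis_clopen (1 : K)).mem_iff.mp hnb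
  obtain ⟨H, hH⟩ :=
    IsTopologicalGroup.exist_openNormalSubgroup_sub_clopen_nhds_of_one hWcl h1W
  have h2 := h H
  rw [QuotientGroup.mk'_apply, QuotientGroup.mk'_apply] at h2
  have h3 : y⁻¹ * z ∈ H.toSubgroup := QuotientGroup.eq.mp h2
  exact hWsub (hH h3) rfl

end Sep

/-- Ribes. If `G = G₁ *_p ⋯ *_p Gₙ` is a free pro-`p` product of
closed subgroups, then for any `σ₁, …, σₙ ∈ G` also
`G = G₁^{σ₁} *_p ⋯ *_p Gₙ^{σₙ}`, where `Gᵢ^{σᵢ} = σᵢ⁻¹ Gᵢ σᵢ`. -/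
theorem statement19 (p : ℕ) (hp : p.Prime) (G : Type*) [Group G] [TopologicalSpace G]
    (hG : IsProP p G) (n : ℕ) (Gs : Fin n → Subgroup G)
    (hclosed : ∀ i, IsClosed ((Gs i) : Set G))
    (hfree : IsFreeProPProductFam p G Gs) (σ : Fin n → G) :
    IsFreeProPProductFam p G
      (fun i => (Gs i).map (MulAut.conj (σ i)⁻¹).toMonoidHom) := by
  classical
  haveI hTG : IsTopologicalGroup G := hG.2.2.2.1
  intro K _ _ hK f hf
  obtain ⟨hKc, hKt2, hKtd, hKtg, hKi⟩ := hK
  haveI := hKc; haveI := hKt2; haveI := hKtd; haveI := hKtg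
  -- one solution at each finite quotient of K
  have exu : ∀ N : OpenNormalSubgroup K,
      ∃! F : G →* K ⧸ N.toSubgroup, Continuous F ∧
        ∀ (i : Fin n) (x : (Gs i).map (MulAut.conj (σ i)⁻¹).toMonoidHom),
          F x = (QuotientGroup.mk' N.toSubgroup).comp (f i) x := by
    intro N
    haveI : DiscreteTopology (K ⧸ N.toSubgroup) :=
      QuotientGroup.discreteTopology N.toOpenSubgroup.isOpen
    haveI : Finite (K ⧸ N.toSubgroup) :=
      Subgroup.quotient_finite_of_isOpen _ N.toOpenSubgroup.isOpen
    have hPG : IsPGroup p (K ⧸ N.toSubgroup) := by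
      obtain ⟨k, hk⟩ := hKi N.toSubgroup N.isNormal' N.toOpenSubgroup.isOpen
      exact IsPGroup.of_card ((Subgroup.index_eq_card _).symm.trans hk)
    exact keyFin hp Gs hfree σ (Nat.card (K ⧸ N.toSubgroup)) (K ⧸ N.toSubgroup) hPG le_rfl
      (fun i => (QuotientGroup.mk' N.toSubgroup).comp (f i))
      (fun i => by
        rw [MonoidHom.coe_comp, QuotientGroup.coe_mk']
        exact QuotientGroup.continuous_mk.comp (hf i))
  choose FN hFN using exu
  -- compatibility of the finite-level solutions
  have hcomp : ∀ (M N : OpenNormalSubgroup K) (hle : M.toSubgroup ≤ N.toSubgroup) (g : G),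
      (QuotientGroup.map M.toSubgroup N.toSubgroup (MonoidHom.id K)
        (by rwa [Subgroup.comap_id])) (FN M g) = FN N g := by
    intro M N hle g
    haveI : DiscreteTopology (K ⧸ M.toSubgroup) :=
      QuotientGroup.discreteTopology M.toOpenSubgroup.isOpen
    have hsol : (QuotientGroup.map M.toSubgroup N.toSubgroup (MonoidHom.id K)
        (by rwa [Subgroup.comap_id])).comp (FN M) = FN N := by
      refine (hFN N).2 _ ⟨?_, fun i x => ?_⟩
      · rw [MonoidHom.coe_comp]
        exact continuous_of_discreteTopology.comp (hFN M).1.1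
      · simp only [MonoidHom.comp_apply]
        calc (QuotientGroup.map M.toSubgroup N.toSubgroup (MonoidHom.id K)
              (by rwa [Subgroup.comap_id])) (FN M x)
            = (QuotientGroup.map M.toSubgroup N.toSubgroup (MonoidHom.id K)
              (by rwa [Subgroup.comap_id]))
              (QuotientGroup.mk' M.toSubgroup (f i x)) := congrArg _ ((hFN M).1.2 i x)
          _ = QuotientGroup.mk' N.toSubgroup (f i x) := by
              rw [QuotientGroup.map_mk']; rfl
    exact DFunLike.congr_fun hsol g
  -- pointwise existence of the limit
  haveI : Nonempty (OpenNormalSubgroup K) :=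
    ⟨⟨⊤, by show (⊤ : Subgroup K).Normal; infer_instance⟩⟩
  have hptwise : ∀ g : G, ∃ y : K, ∀ N : OpenNormalSubgroup K,
      QuotientGroup.mk' N.toSubgroup y = FN N g := by
    intro g
    set A : OpenNormalSubgroup K → Set K := fun N =>
      (⇑(QuotientGroup.mk' N.toSubgroup)) ⁻¹' {FN N g} with hA
    have hAne : ∀ N, (A N).Nonempty := fun N => by
      obtain ⟨y, hy⟩ := QuotientGroup.mk'_surjective N.toSubgroup (FN N g)
      exact ⟨y, hy⟩
    have hAcl : ∀ N, IsClosed (A N) := fun N => by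
      haveI : DiscreteTopology (K ⧸ N.toSubgroup) :=
        QuotientGroup.discreteTopology N.toOpenSubgroup.isOpen
      refine IsClosed.preimage ?_ isClosed_singleton
      rw [QuotientGroup.coe_mk']
      exact QuotientGroup.continuous_mk
    have hdir : Directed (· ⊇ ·) A := by
      intro M N
      have hopen : IsOpen ((M.toSubgroup ⊓ N.toSubgroup : Subgroup K) : Set K) := by
        rw [Subgroup.coe_inf]
        exact M.toOpenSubgroup.isOpen.inter N.toOpenSubgroup.isOpen
      refine ⟨⟨⟨M.toSubgroup ⊓ N.toSubgroup, hopen⟩,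
        Subgroup.normal_inf_normal _ _⟩, ?_, ?_⟩
      · intro y hy
        simp only [hA, Set.mem_preimage, Set.mem_singleton_iff] at hy ⊢
        have h2 := hcomp ⟨⟨M.toSubgroup ⊓ N.toSubgroup, hopen⟩,
          Subgroup.normal_inf_normal _ _⟩ M
          (inf_le_left : M.toSubgroup ⊓ N.toSubgroup ≤ M.toSubgroup) g
        rw [← h2, ← hy]
        simp only [QuotientGroup.mk'_apply]
        rw [QuotientGroup.map_mk]
        rfl
      · intro y hy
        simp only [hA, Set.mem_preimage, Set.mem_singleton_iff] at hy ⊢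
        have h2 := hcomp ⟨⟨M.toSubgroup ⊓ N.toSubgroup, hopen⟩,
          Subgroup.normal_inf_normal _ _⟩ N
          (inf_le_right : M.toSubgroup ⊓ N.toSubgroup ≤ N.toSubgroup) g
        rw [← h2, ← hy]
        simp only [QuotientGroup.mk'_apply]
        rw [QuotientGroup.map_mk]
        rfl
    obtain ⟨y, hy⟩ := IsCompact.nonempty_iInter_of_directed_nonempty_isCompact_isClosed
      A hdir hAne (fun N => (hAcl N).isCompact) hAcl
    exact ⟨y, fun N => Set.mem_iInter.mp hy N⟩
  choose Fc hFc using hptwise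
  -- assemble the limit homomorphism
  have hone : Fc 1 = 1 := sep_by_open_normal (fun N => by rw [hFc 1 N, map_one, map_one])
  have hmul : ∀ a b : G, Fc (a * b) = Fc a * Fc b := by
    intro a b
    refine sep_by_open_normal (fun N => ?_)
    rw [map_mul, hFc (a * b) N, hFc a N, hFc b N, map_mul]
  set F : G →* K := { toFun := Fc, map_one' := hone, map_mul' := hmul } with hFdef
  have hFe : ∀ (i : Fin n) (x : (Gs i).map (MulAut.conj (σ i)⁻¹).toMonoidHom),
      F x = f i x := by
    intro i x
    refine sep_by_open_normal (fun N => ?_)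
    show QuotientGroup.mk' N.toSubgroup (Fc x) = QuotientGroup.mk' N.toSubgroup (f i x)
    exact (hFc (x : G) N).trans ((hFN N).1.2 i x)
  have hFcont : Continuous F := by
    rw [continuous_def]
    intro V hV
    rw [isOpen_iff_mem_nhds]
    intro g hg
    have hmV : IsOpen ((fun y : K => F g * y) ⁻¹' V) :=
      hV.preimage (continuous_const.mul continuous_id)
    have h1m : (1 : K) ∈ (fun y : K => F g * y) ⁻¹' V := by
      simp only [Set.mem_preimage, mul_one]
      exact hg
    obtain ⟨W0, ⟨h1W, hWcl⟩, hWsub⟩ :=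
      (nhds_basis_clopen (1 : K)).mem_iff.mp (hmV.mem_nhds h1m)
    obtain ⟨H, hH⟩ :=
      IsTopologicalGroup.exist_openNormalSubgroup_sub_clopen_nhds_of_one hWcl h1W
    haveI : DiscreteTopology (K ⧸ H.toSubgroup) :=
      QuotientGroup.discreteTopology H.toOpenSubgroup.isOpen
    have hU : IsOpen ((⇑(FN H)) ⁻¹' {FN H g}) :=
      (isOpen_discrete _).preimage (hFN H).1.1
    refine Filter.mem_of_superset (hU.mem_nhds rfl) ?_
    intro x hx
    have hx' : FN H x = FN H g := hx
    have h2 : QuotientGroup.mk' H.toSubgroup (Fc g) = QuotientGroup.mk' H.toSubgroup (Fc x) :=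
      (hFc g H).trans (hx'.symm.trans (hFc x H).symm)
    rw [QuotientGroup.mk'_apply, QuotientGroup.mk'_apply] at h2
    have h3 : (Fc g)⁻¹ * Fc x ∈ H.toSubgroup := QuotientGroup.eq.mp h2
    have h4 := hWsub (hH h3)
    have h5 : F g * ((Fc g)⁻¹ * Fc x) ∈ V := h4
    have h6 : F g * ((Fc g)⁻¹ * Fc x) = Fc x := mul_inv_cancel_left _ _
    have h7 : Fc x ∈ V := by rw [← h6]; exact h5
    exact h7
  refine ⟨F, ⟨hFcont, hFe⟩, ?_⟩
  rintro F1 ⟨hF1c, hF1e⟩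
  ext g
  refine sep_by_open_normal (fun N => ?_)
  haveI : DiscreteTopology (K ⧸ N.toSubgroup) :=
    QuotientGroup.discreteTopology N.toOpenSubgroup.isOpen
  have h5 : (QuotientGroup.mk' N.toSubgroup).comp F1 = FN N := by
    refine (hFN N).2 _ ⟨?_, fun i x => ?_⟩
    · rw [MonoidHom.coe_comp, QuotientGroup.coe_mk']
      exact QuotientGroup.continuous_mk.comp hF1c
    · simp only [MonoidHom.comp_apply]
      exact congrArg _ (hF1e i x)
  have h6 : QuotientGroup.mk' N.toSubgroup (F1 g) = FN N g := DFunLike.congr_fun h5 g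
  rw [h6]
  exact (hFc g N).symm
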